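/- The number of words of length p ≥ 2 over the alphabet {0,1,2} that occur as the initial p ternary digits of some ternary expansion of some element of the Cantor set equals 5·2^{p−1} − 2. -/

import Mathlib

noncomputable def tval (d : ℕ → Fin 3) : ℝ := ∑' i : ℕ, ((d i : ℕ) : ℝ) / 3 ^ (i + 1)

lemma digit_le (d : Fin 3) : ((d : ℕ) : ℝ) ≤ 2 := by
  have := d.is_lt
  exact_mod_cast Nat.lt_succ_iff.mp this

lemma tval_summable (d : ℕ → Fin 3) : Summable (fun i : ℕ => ((d i : ℕ) : ℝ) / 3 ^ (i + 1)) := by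
  apply Summable.of_nonneg_of_le (fun i => by positivity) (fun i => ?_)
    (Summable.mul_left (2:ℝ) (summable_geometric_of_lt_one (by norm_num) (by norm_num : (1/3:ℝ) < 1)))
  have h : ((d i : ℕ) : ℝ) ≤ 2 := digit_le _
  have h3 : (0:ℝ) < 3 ^ (i+1) := by positivity
  rw [div_le_iff₀ h3]
  calc ((d i : ℕ) : ℝ) ≤ 2 := h
    _ ≤ 2 * ((1/3)^i * 3^(i+1)) := by
        rw [one_div, inv_pow]
        rw [pow_succ]
        field_simp
        norm_num
    _ = 2 * (1/3)^i * 3^(i+1) := by ring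

lemma tval_nonneg (d : ℕ → Fin 3) : 0 ≤ tval d :=
  tsum_nonneg (fun i => by positivity)

lemma two_geom : ∑' i : ℕ, (2:ℝ) / 3 ^ (i + 1) = 1 := by
  have : ∀ i : ℕ, (2:ℝ) / 3 ^ (i+1) = (2/3) * (1/3)^i := by
    intro i; rw [pow_succ]; field_simp; rw [← mul_pow]; norm_num
  rw [tsum_congr this, tsum_mul_left, tsum_geometric_of_lt_one (by norm_num) (by norm_num)]
  norm_num

lemma tval_le_one (d : ℕ → Fin 3) : tval d ≤ 1 := by
  rw [← two_geom]
  apply Summable.tsum_le_tsum (fun i => ?_) (tval_summable d)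
  · exact (Summable.congr (tval_summable (fun _ => 2)) (by intro i; norm_num))
  · gcongr
    exact digit_le _

lemma tval_step (d : ℕ → Fin 3) :
    tval d = (((d 0 : ℕ) : ℝ) + tval (fun n => d (n+1))) / 3 := by
  unfold tval
  rw [Summable.tsum_eq_zero_add (tval_summable d)]
  have : ∀ n : ℕ, ((d (n+1) : ℕ) : ℝ) / 3 ^ (n + 1 + 1) = (1/3) * (((d (n+1) : ℕ) : ℝ) / 3 ^ (n+1)) := by
    intro n; rw [pow_succ]; ring
  rw [tsum_congr this, tsum_mul_left]
  ring

lemma tval_decomp (d : ℕ → Fin 3) (k : ℕ) :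
    tval d = (∑ i ∈ Finset.range k, ((d i : ℕ) : ℝ) / 3 ^ (i + 1))
      + tval (fun n => d (n + k)) / 3 ^ k := by
  induction k with
  | zero => simp
  | succ k ih =>
    rw [ih, Finset.sum_range_succ]
    have := tval_step (fun n => d (n + k))
    simp only [zero_add] at this
    rw [this]
    have : (fun n => d (n + 1 + k)) = (fun n => d (n + (k+1))) := by
      funext n; congr 1; omega
    rw [this, pow_succ]
    ring

lemma tval_eq_zero (d : ℕ → Fin 3) (h : tval d = 0) : ∀ i, d i = 0 := by
  intro i
  have h1 : ((d i : ℕ) : ℝ) / 3 ^ (i + 1) ≤ 0 := by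
    rw [← h]; exact Summable.le_tsum (tval_summable d) i (fun j _ => by positivity)
  have h2 : (0:ℝ) ≤ ((d i : ℕ) : ℝ) / 3 ^ (i + 1) := by positivity
  have h3 : ((d i : ℕ) : ℝ) = 0 := by
    have := le_antisymm h1 h2
    field_simp at this
    rw [mul_zero] at this
    exact_mod_cast this
  have : (d i : ℕ) = 0 := by exact_mod_cast h3
  exact Fin.ext this

lemma tval_eq_one (d : ℕ → Fin 3) (h : tval d = 1) : ∀ i, d i = 2 := by
  intro i
  set g : ℕ → ℝ := fun i => (2 - ((d i : ℕ) : ℝ)) / 3 ^ (i + 1) with hg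
  have hsum2 : Summable (fun i : ℕ => (2:ℝ) / 3 ^ (i + 1)) :=
    (Summable.congr (tval_summable (fun _ => 2)) (by intro i; norm_num))
  have hgs : Summable g := by
    apply Summable.congr (hsum2.sub (tval_summable d))
    intro j; simp [hg]; ring
  have hts : ∑' j, g j = 0 := by
    have := Summable.tsum_sub hsum2 (tval_summable d)
    have e : ∑' j, g j = (∑' i : ℕ, (2:ℝ)/3^(i+1)) - tval d := by
      rw [show (∑' i : ℕ, (2:ℝ)/3^(i+1)) - tval d = ∑' (b : ℕ), ((2:ℝ) / 3 ^ (b + 1) - ((d b : ℕ):ℝ) / 3 ^ (b + 1)) from this.symm]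
      apply tsum_congr; intro j; simp [hg]; ring
    rw [e, two_geom, h]; ring
  have h1 : g i ≤ 0 := by rw [← hts]; exact Summable.le_tsum hgs i (fun j _ => by
    have := digit_le (d j); simp only [hg]
    apply div_nonneg (by linarith) (by positivity))
  have h2 : 0 ≤ g i := by
    have := digit_le (d i); simp only [hg]
    apply div_nonneg (by linarith) (by positivity)
  have h3 : ((d i : ℕ) : ℝ) = 2 := by
    have := le_antisymm h1 h2
    simp only [hg] at this
    field_simp at this
    linarith
  have : (d i : ℕ) = 2 := by exact_mod_cast h3
  exact Fin.ext this

lemma tval_mem_preCantorSet (n : ℕ) (d : ℕ → Fin 3) (hd : ∀ i, d i ≠ 1) :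
    tval d ∈ preCantorSet n := by
  induction n generalizing d with
  | zero => exact ⟨tval_nonneg d, tval_le_one d⟩
  | succ n ih =>
    have h0 := hd 0
    have step := tval_step d
    rcases Fin.exists_fin_two.mp ⟨(0:Fin 2), rfl⟩ with _ -- dummy
    have : d 0 = 0 ∨ d 0 = 2 := by omega
    rcases this with h | h
    · left
      exact ⟨tval (fun n => d (n+1)), ih _ (fun i => hd (i+1)), by
        rw [step, h]; simp⟩
    · right
      exact ⟨tval (fun n => d (n+1)), ih _ (fun i => hd (i+1)), by
        rw [step, h]; norm_num⟩

lemma tval_mem_cantorSet (d : ℕ → Fin 3) (hd : ∀ i, d i ≠ 1) : tval d ∈ cantorSet :=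
  Set.mem_iInter.mpr (fun n => tval_mem_preCantorSet n d hd)

lemma preCantorSet_succ_subset (n : ℕ) : preCantorSet (n+1) ⊆ preCantorSet n := by
  induction n with
  | zero =>
    rintro x (⟨y, hy, rfl⟩ | ⟨y, hy, rfl⟩) <;>
      · simp only [preCantorSet_zero, Set.mem_Icc] at *
        constructor <;> nlinarith [hy.1, hy.2]
  | succ n ih =>
    rintro x (⟨y, hy, rfl⟩ | ⟨y, hy, rfl⟩)
    · exact Or.inl ⟨y, ih hy, rfl⟩
    · exact Or.inr ⟨y, ih hy, rfl⟩

lemma cantorSet_self_similar {x : ℝ} (hx : x ∈ cantorSet) :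
    (3 * x ∈ cantorSet) ∨ (3 * x - 2 ∈ cantorSet) := by
  by_cases h : ∀ n, 3 * x ∈ preCantorSet n
  · exact Or.inl (Set.mem_iInter.mpr h)
  · push_neg at h
    obtain ⟨n0, hn0⟩ := h
    right
    apply Set.mem_iInter.mpr
    intro n
    have key : ∀ m, n0 ≤ m → 3 * x - 2 ∈ preCantorSet m := by
      intro m hm
      have hx' : x ∈ preCantorSet (m+1) := Set.mem_iInter.mp hx (m+1)
      rcases hx' with ⟨y, hy, hxy⟩ | ⟨y, hy, hxy⟩
      · exfalso
        apply hn0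
        have : 3 * x = y := by field_simp at hxy; linarith
        exact this ▸ preCantorSet_antitone hm hy
      · have : 3 * x - 2 = y := by field_simp at hxy; linarith
        exact this ▸ hy
    rcases le_total n0 n with h' | h'
    · exact key n h'
    · exact preCantorSet_antitone h' (key n0 le_rfl)

lemma cantorSet_step {x : ℝ} (hx : x ∈ cantorSet) :
    ∃ (c : Fin 3) (y : ℝ), y ∈ cantorSet ∧ c ≠ 1 ∧ x = (((c:ℕ):ℝ) + y) / 3 := by
  rcases cantorSet_self_similar hx with h | h
  · exact ⟨0, 3 * x, h, by decide, by norm_num⟩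
  · refine ⟨2, 3 * x - 2, h, by decide, ?_⟩
    have : (((2:Fin 3):ℕ):ℝ) = 2 := by norm_num
    rw [this]; ring

noncomputable def nextC (y : {z : ℝ // z ∈ cantorSet}) : Fin 3 × {z : ℝ // z ∈ cantorSet} :=
  ⟨(cantorSet_step y.2).choose, (cantorSet_step y.2).choose_spec.choose,
    (cantorSet_step y.2).choose_spec.choose_spec.1⟩

lemma nextC_spec (y : {z : ℝ // z ∈ cantorSet}) :
    (nextC y).1 ≠ 1 ∧ (y:ℝ) = ((((nextC y).1 : ℕ):ℝ) + ((nextC y).2 : ℝ)) / 3 :=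
  ⟨(cantorSet_step y.2).choose_spec.choose_spec.2.1,
   (cantorSet_step y.2).choose_spec.choose_spec.2.2⟩

noncomputable def orbitC (x : {z : ℝ // z ∈ cantorSet}) : ℕ → {z : ℝ // z ∈ cantorSet}
  | 0 => x
  | n + 1 => (nextC (orbitC x n)).2

noncomputable def digitsC (x : {z : ℝ // z ∈ cantorSet}) (n : ℕ) : Fin 3 :=
  (nextC (orbitC x n)).1

lemma digitsC_ne_one (x : {z : ℝ // z ∈ cantorSet}) (n : ℕ) : digitsC x n ≠ 1 :=
  (nextC_spec _).1

lemma orbitC_decomp (x : {z : ℝ // z ∈ cantorSet}) (n : ℕ) :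
    (x:ℝ) = (∑ i ∈ Finset.range n, ((digitsC x i : ℕ) : ℝ) / 3 ^ (i + 1))
      + (orbitC x n : ℝ) / 3 ^ n := by
  induction n with
  | zero => simp [orbitC]
  | succ n ih =>
    rw [ih, Finset.sum_range_succ]
    have h := (nextC_spec (orbitC x n)).2
    have : (orbitC x (n+1) : ℝ) = (nextC (orbitC x n)).2 := rfl
    rw [this]
    rw [show ((orbitC x n : ℝ)) = ((((digitsC x n : ℕ)):ℝ) + ((nextC (orbitC x n)).2 : ℝ)) / 3 from h]
    rw [pow_succ]
    ring

lemma exists_digits {x : ℝ} (hx : x ∈ cantorSet) :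
    ∃ d : ℕ → Fin 3, (∀ i, d i ≠ 1) ∧ tval d = x := by
  refine ⟨digitsC ⟨x, hx⟩, digitsC_ne_one _, ?_⟩
  set d := digitsC ⟨x, hx⟩
  have key : ∀ n : ℕ, |tval d - x| ≤ 2 / 3 ^ n := by
    intro n
    have h1 := tval_decomp d n
    have h2 := orbitC_decomp ⟨x, hx⟩ n
    have hb1 : (0:ℝ) ≤ tval (fun m => d (m + n)) := tval_nonneg _
    have hb2 : tval (fun m => d (m + n)) ≤ 1 := tval_le_one _
    have horb := (orbitC ⟨x, hx⟩ n).2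
    have hol := (cantorSet_subset_unitInterval horb).1
    have hor := (cantorSet_subset_unitInterval horb).2
    have h3 : (0:ℝ) < 3 ^ n := by positivity
    have heq : tval d - x = (tval (fun m => d (m + n)) - (orbitC ⟨x,hx⟩ n : ℝ)) / 3 ^ n := by
      have h2' : x = (∑ i ∈ Finset.range n, ((d i : ℕ) : ℝ) / 3 ^ (i + 1)) + (orbitC ⟨x,hx⟩ n : ℝ) / 3 ^ n := h2
      rw [h1]
      linear_combination -h2'
    rw [heq, abs_div, abs_of_pos h3, div_le_div_iff_of_pos_right h3, abs_le]
    constructor <;> linarith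
  have : tval d = x := by
    by_contra hne
    have hpos : 0 < |tval d - x| := abs_pos.mpr (sub_ne_zero.mpr hne)
    obtain ⟨n, hn⟩ := pow_unbounded_of_one_lt (2 / |tval d - x|) (by norm_num : (1:ℝ) < 3)
    have := key n
    rw [le_div_iff₀ (by positivity)] at this
    rw [div_lt_iff₀ hpos] at hn
    nlinarith [abs_nonneg (tval d - x)]
  exact this

lemma compare_expansions (d e : ℕ → Fin 3) (h : tval d = tval e) (k : ℕ)
    (hk : ∀ i, i < k → d i = e i) (hlt : (d k : ℕ) < (e k : ℕ)) :
    ((e k : ℕ) = (d k : ℕ) + 1) ∧ ∀ i, k < i → d i = 2 ∧ e i = 0 := by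
  have hd := tval_decomp d (k+1)
  have he := tval_decomp e (k+1)
  set Td := tval (fun n => d (n + (k+1))) with hTd
  set Te := tval (fun n => e (n + (k+1))) with hTe
  have hsum : ∑ i ∈ Finset.range (k+1), ((d i : ℕ) : ℝ) / 3 ^ (i + 1)
      = (∑ i ∈ Finset.range k, ((e i : ℕ) : ℝ) / 3 ^ (i + 1)) + ((d k : ℕ):ℝ) / 3^(k+1) := by
    rw [Finset.sum_range_succ]
    congr 1
    exact Finset.sum_congr rfl (fun i hi => by rw [hk i (Finset.mem_range.mp hi)])
  have hsume : ∑ i ∈ Finset.range (k+1), ((e i : ℕ) : ℝ) / 3 ^ (i + 1)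
      = (∑ i ∈ Finset.range k, ((e i : ℕ) : ℝ) / 3 ^ (i + 1)) + ((e k : ℕ):ℝ) / 3^(k+1) := by
    rw [Finset.sum_range_succ]
  have h3 : (0:ℝ) < 3 ^ (k+1) := by positivity
  have key : ((d k : ℕ):ℝ) + Td = ((e k : ℕ):ℝ) + Te := by
    have := h
    rw [hd, he, hsum, hsume] at this
    have h' : ((d k : ℕ):ℝ) / 3^(k+1) + Td / 3 ^ (k+1) = ((e k : ℕ):ℝ) / 3^(k+1) + Te / 3 ^ (k+1) := by
      linarith
    field_simp at h'
    linarith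
  have hTd1 : Td ≤ 1 := tval_le_one _
  have hTe0 : 0 ≤ Te := tval_nonneg _
  have hcast : ((d k : ℕ):ℝ) + 1 ≤ ((e k : ℕ):ℝ) := by exact_mod_cast hlt
  have hTdeq : Td = 1 := le_antisymm hTd1 (by linarith)
  have hTeeq : Te = 0 := le_antisymm (by linarith [tval_nonneg (fun n => d (n + (k+1))), tval_le_one (fun n => e (n + (k+1)))]) hTe0
  refine ⟨?_, ?_⟩
  · have : ((e k : ℕ):ℝ) = ((d k : ℕ):ℝ) + 1 := by
      rw [hTdeq, hTeeq] at key; linarith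
    exact_mod_cast this
  · intro i hi
    have hd2 := tval_eq_one _ hTdeq (i - (k+1))
    have he0 := tval_eq_zero _ hTeeq (i - (k+1))
    rw [show i - (k+1) + (k+1) = i by omega] at hd2 he0
    exact ⟨hd2, he0⟩

lemma tval_all_zero (f : ℕ → Fin 3) (hf : ∀ i, f i = 0) : tval f = 0 := by
  have h : ∀ i : ℕ, ((f i : ℕ):ℝ)/3^(i+1) = 0 := fun i => by rw [hf i]; norm_num
  unfold tval
  rw [tsum_congr h]
  exact tsum_zero

lemma tval_all_two (f : ℕ → Fin 3) (hf : ∀ i, f i = 2) : tval f = 1 := by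
  unfold tval
  exact (tsum_congr (fun i => by rw [hf i]; norm_num)).trans two_geom

lemma tval_one_zeros (d e : ℕ → Fin 3) (k : ℕ) (hpre : ∀ i, i < k → d i = e i)
    (hdk : d k = 1) (hek : e k = 0) (htl : ∀ i, k < i → d i = 0 ∧ e i = 2) :
    tval d = tval e := by
  rw [tval_decomp d (k+1), tval_decomp e (k+1)]
  rw [tval_all_zero (fun n => d (n + (k+1))) (fun n => (htl _ (by omega)).1)]
  rw [tval_all_two (fun n => e (n + (k+1))) (fun n => (htl _ (by omega)).2)]
  rw [Finset.sum_range_succ, Finset.sum_range_succ,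
    Finset.sum_congr rfl (fun i hi => by rw [hpre i (Finset.mem_range.mp hi)])]
  rw [hdk, hek]
  have h3 : (0:ℝ) < 3 ^ (k+1) := by positivity
  have : (((1:Fin 3):ℕ):ℝ) = 1 := by norm_num
  rw [this]
  have : (((0:Fin 3):ℕ):ℝ) = 0 := by norm_num
  rw [this]
  ring

lemma tval_one_twos (d e : ℕ → Fin 3) (k : ℕ) (hpre : ∀ i, i < k → d i = e i)
    (hdk : d k = 1) (hek : e k = 2) (htl : ∀ i, k < i → d i = 2 ∧ e i = 0) :
    tval d = tval e := by
  rw [tval_decomp d (k+1), tval_decomp e (k+1)]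
  rw [tval_all_two (fun n => d (n + (k+1))) (fun n => (htl _ (by omega)).1)]
  rw [tval_all_zero (fun n => e (n + (k+1))) (fun n => (htl _ (by omega)).2)]
  rw [Finset.sum_range_succ, Finset.sum_range_succ,
    Finset.sum_congr rfl (fun i hi => by rw [hpre i (Finset.mem_range.mp hi)])]
  rw [hdk, hek]
  have h1 : (((1:Fin 3):ℕ):ℝ) = 1 := by norm_num
  have h2 : (((2:Fin 3):ℕ):ℝ) = 2 := by norm_num
  rw [h1, h2]
  ring

def Good (p : ℕ) (b : Fin p → Fin 3) : Prop :=
  (∀ i, b i ≠ 1) ∨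
    ∃ k : Fin p, b k = 1 ∧ (∀ i, i < k → b i ≠ 1) ∧
      ((∀ i, k < i → b i = 0) ∨ (∀ i, k < i → b i = 2))

lemma counts_iff (p : ℕ) (b : Fin p → Fin 3) :
    (∃ d : ℕ → Fin 3, tval d ∈ cantorSet ∧ ∀ i : Fin p, d (i : ℕ) = b i) ↔ Good p b := by
  constructor
  · rintro ⟨d, hmem, hext⟩
    obtain ⟨e, he1, hee⟩ := exists_digits hmem
    by_cases hde : ∀ n, d n = e n
    · left
      intro i
      rw [← hext i, hde i]
      exact he1 i
    · push_neg at hde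
      have hk := Nat.find_spec hde
      set k := Nat.find hde with hkdef
      have hmin : ∀ i, i < k → d i = e i := fun i hi =>
        not_not.mp (Nat.find_min hde hi)
      rcases Nat.lt_or_ge (d k : ℕ) (e k : ℕ) with hlt | hge
      · obtain ⟨hek, htail⟩ := compare_expansions d e hee.symm k hmin hlt
        have he1k := he1 k
        have hdk : d k = 1 := by omega
        by_cases hkp : k < p
        · right
          refine ⟨⟨k, hkp⟩, by rw [← hext ⟨k, hkp⟩]; exact hdk, ?_, Or.inr ?_⟩
          · intro i hi
            rw [← hext i, hmin i hi]
            exact he1 i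
          · intro i hi
            rw [← hext i]
            exact (htail i hi).1
        · left
          intro i
          rw [← hext i, hmin i (by have := i.is_lt; omega)]
          exact he1 i
      · have hlt' : (e k : ℕ) < (d k : ℕ) := by
          rcases Nat.lt_or_ge (e k : ℕ) (d k : ℕ) with h | h
          · exact h
          · exact absurd (Fin.ext (by omega) : d k = e k) hk
        obtain ⟨hdk', htail⟩ := compare_expansions e d hee k (fun i hi => (hmin i hi).symm) hlt'
        have he1k := he1 k
        have hdk : d k = 1 := by omega
        by_cases hkp : k < p
        · right
          refine ⟨⟨k, hkp⟩, by rw [← hext ⟨k, hkp⟩]; exact hdk, ?_, Or.inl ?_⟩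
          · intro i hi
            rw [← hext i, hmin i hi]
            exact he1 i
          · intro i hi
            rw [← hext i]
            exact (htail i hi).2
        · left
          intro i
          rw [← hext i, hmin i (by have := i.is_lt; omega)]
          exact he1 i
  · rintro (h1 | ⟨k, hbk, hfirst, htail⟩)
    · refine ⟨fun n => if h : n < p then b ⟨n, h⟩ else 0, ?_, fun i => by simp [i.is_lt]⟩
      apply tval_mem_cantorSet
      intro n
      by_cases h : n < p
      · simpa [h] using h1 ⟨n, h⟩
      · simp [h]
    · rcases htail with ht0 | ht2
      · set d : ℕ → Fin 3 := fun n => if h : n < p then b ⟨n, h⟩ else 0 with hd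
        set e : ℕ → Fin 3 := fun n => if n < (k:ℕ) then d n else if n = (k:ℕ) then 0 else 2 with he
        have heq : tval d = tval e := by
          apply tval_one_zeros d e k
          · intro i hi; simp only [he, hi, if_pos]
          · simp only [hd, k.is_lt, dif_pos]
            exact (Fin.eta k k.is_lt) ▸ hbk
          · simp only [he]
            rw [if_neg (by omega)]
            simp
          · intro i hi
            constructor
            · simp only [hd]
              split
              · next h => exact ht0 ⟨i, h⟩ (Fin.lt_def.mpr hi)
              · rfl
            · simp only [he]
              rw [if_neg (by omega), if_neg (by omega)]
        refine ⟨d, ?_, fun i => by simp [hd, i.is_lt]⟩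
        rw [heq]
        apply tval_mem_cantorSet
        intro n
        rcases lt_trichotomy n (k:ℕ) with h | h | h
        · simp only [he, h, if_pos]
          have hnp : n < p := lt_trans h k.is_lt
          simp only [hd, hnp, dif_pos]
          exact hfirst ⟨n, hnp⟩ (Fin.lt_def.mpr h)
        · simp only [he]
          rw [if_neg (by omega), if_pos h]
          decide
        · simp only [he]
          rw [if_neg (by omega), if_neg (by omega)]
          decide
      · set d : ℕ → Fin 3 := fun n => if h : n < p then b ⟨n, h⟩ else 2 with hd
        set e : ℕ → Fin 3 := fun n => if n < (k:ℕ) then d n else if n = (k:ℕ) then 2 else 0 with he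
        have heq : tval d = tval e := by
          apply tval_one_twos d e k
          · intro i hi; simp only [he, hi, if_pos]
          · simp only [hd, k.is_lt, dif_pos]
            exact (Fin.eta k k.is_lt) ▸ hbk
          · simp only [he]
            rw [if_neg (by omega)]
            simp
          · intro i hi
            constructor
            · simp only [hd]
              split
              · next h => exact ht2 ⟨i, h⟩ (Fin.lt_def.mpr hi)
              · rfl
            · simp only [he]
              rw [if_neg (by omega), if_neg (by omega)]
        refine ⟨d, ?_, fun i => by simp [hd, i.is_lt]⟩
        rw [heq]
        apply tval_mem_cantorSet
        intro n
        rcases lt_trichotomy n (k:ℕ) with h | h | h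
        · simp only [he, h, if_pos]
          have hnp : n < p := lt_trans h k.is_lt
          simp only [hd, hnp, dif_pos]
          exact hfirst ⟨n, hnp⟩ (Fin.lt_def.mpr h)
        · simp only [he]
          rw [if_neg (by omega), if_pos h]
          decide
        · simp only [he]
          rw [if_neg (by omega), if_neg (by omega)]
          decide

def emb2 : Fin 2 → Fin 3 := ![0, 2]

lemma emb2_ne_one (j : Fin 2) : emb2 j ≠ 1 := by fin_cases j <;> decide

lemma emb2_inj : Function.Injective emb2 := by decide

lemma emb2_of_ne_one (a : Fin 3) (ha : a ≠ 1) : emb2 (if a = 0 then 0 else 1) = a := by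
  fin_cases a <;> simp_all <;> decide

def fA (p : ℕ) (w : Fin p → Fin 2) : Fin p → Fin 3 := fun i => emb2 (w i)

def fC (p : ℕ) (w : Fin (p-1) → Fin 2) : Fin p → Fin 3 :=
  fun i => if h : (i:ℕ) < p-1 then emb2 (w ⟨i, h⟩) else 1

def fB (p : ℕ) (x : (Σ k : Fin (p-1), Fin (k:ℕ) → Fin 2) × Fin 2) : Fin p → Fin 3 :=
  fun i => if h : (i:ℕ) < (x.1.1:ℕ) then emb2 (x.1.2 ⟨i, h⟩)
    else if (i:ℕ) = (x.1.1:ℕ) then 1 else emb2 x.2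

lemma good_eq_ranges (p : ℕ) (hp : 2 ≤ p) :
    {b : Fin p → Fin 3 | Good p b}
      = (Set.range (fA p) ∪ Set.range (fB p)) ∪ Set.range (fC p) := by
  ext b
  simp only [Set.mem_setOf_eq, Set.mem_union, Set.mem_range]
  constructor
  · rintro (h1 | ⟨k, hbk, hfirst, htail⟩)
    · exact Or.inl (Or.inl ⟨fun i => if b i = 0 then 0 else 1,
        funext fun i => emb2_of_ne_one _ (h1 i)⟩)
    · by_cases hk : (k:ℕ) < p - 1
      · left; right
        rcases htail with ht | ht
        · refine ⟨⟨⟨⟨(k:ℕ), hk⟩, fun i => if b ⟨(i:ℕ), by have := i.is_lt; have := k.is_lt; omega⟩ = 0 then 0 else 1⟩, 0⟩, ?_⟩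
          funext i
          simp only [fB]
          split
          · next h =>
            rw [show (⟨(i:ℕ), by have := k.is_lt; omega⟩ : Fin p) = i from Fin.ext rfl]
            exact emb2_of_ne_one _ (hfirst i h)
          · next h =>
            split
            · next h2 =>
              have hik : (i:ℕ) = (k:ℕ) := h2
              rw [show i = k from Fin.ext hik]
              exact hbk.symm
            · next h2 =>
              rw [show (b i) = 0 from ht i (by exact lt_of_le_of_ne (by exact Nat.le_of_not_lt h) (Ne.symm h2) : (k:ℕ) < (i:ℕ))]
              decide
        · refine ⟨⟨⟨⟨(k:ℕ), hk⟩, fun i => if b ⟨(i:ℕ), by have := i.is_lt; have := k.is_lt; omega⟩ = 0 then 0 else 1⟩, 1⟩, ?_⟩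
          funext i
          simp only [fB]
          split
          · next h =>
            rw [show (⟨(i:ℕ), by have := k.is_lt; omega⟩ : Fin p) = i from Fin.ext rfl]
            exact emb2_of_ne_one _ (hfirst i h)
          · next h =>
            split
            · next h2 =>
              have hik : (i:ℕ) = (k:ℕ) := h2
              rw [show i = k from Fin.ext hik]
              exact hbk.symm
            · next h2 =>
              rw [show (b i) = 2 from ht i (by exact lt_of_le_of_ne (by exact Nat.le_of_not_lt h) (Ne.symm h2) : (k:ℕ) < (i:ℕ))]
              decide
      · right
        have hk' : (k:ℕ) = p - 1 := by have := k.is_lt; omega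
        refine ⟨fun i => if b ⟨(i:ℕ), by have := i.is_lt; omega⟩ = 0 then 0 else 1, ?_⟩
        funext i
        simp only [fC]
        split
        · next h =>
          apply emb2_of_ne_one
          exact hfirst ⟨(i:ℕ), by omega⟩ (by simp only [Fin.lt_def]; omega)
        · next h =>
          have : i = k := Fin.ext (by have := i.is_lt; omega)
          rw [this, hbk]
  · rintro ((⟨w, rfl⟩ | ⟨⟨⟨k, w⟩, c⟩, rfl⟩) | ⟨w, rfl⟩)
    · exact Or.inl (fun i => emb2_ne_one _)
    · right
      have hkp : (k:ℕ) < p := by have := k.is_lt; omega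
      refine ⟨⟨(k:ℕ), hkp⟩, ?_, ?_, ?_⟩
      · simp only [fB]
        rw [dif_neg (by omega)]
        simp
      · intro i hi
        have hi' : (i:ℕ) < (k:ℕ) := hi
        simp only [fB]
        rw [dif_pos hi']
        exact emb2_ne_one _
      · fin_cases c
        · left
          intro i hi
          have hi' : (k:ℕ) < (i:ℕ) := hi
          simp only [fB]
          rw [dif_neg (by omega), if_neg (by omega)]
          decide
        · right
          intro i hi
          have hi' : (k:ℕ) < (i:ℕ) := hi
          simp only [fB]
          rw [dif_neg (by omega), if_neg (by omega)]
          decide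
    · right
      refine ⟨⟨p-1, by omega⟩, ?_, ?_, Or.inl ?_⟩
      · simp only [fC]
        rw [dif_neg (by omega)]
      · intro i hi
        have hi' : (i:ℕ) < p - 1 := hi
        simp only [fC]
        rw [dif_pos hi']
        exact emb2_ne_one _
      · intro i hi
        have hi' : p - 1 < (i:ℕ) := hi
        exact absurd i.is_lt (by omega)

lemma fA_inj (p : ℕ) : Function.Injective (fA p) := by
  intro w w' h
  funext i
  exact emb2_inj (congrFun h i)

lemma fC_inj (p : ℕ) (hp : 2 ≤ p) : Function.Injective (fC p) := by
  intro w w' h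
  funext i
  have hip : (i:ℕ) < p := by have := i.is_lt; omega
  have := congrFun h ⟨(i:ℕ), hip⟩
  simp only [fC] at this
  rw [dif_pos i.is_lt, dif_pos i.is_lt] at this
  exact emb2_inj ((Fin.eta i i.is_lt) ▸ this)

lemma fB_inj (p : ℕ) (hp : 2 ≤ p) : Function.Injective (fB p) := by
  rintro ⟨⟨k, w⟩, c⟩ ⟨⟨k', w'⟩, c'⟩ h
  have hkk : k = k' := by
    by_contra hne
    rcases Nat.lt_or_ge (k:ℕ) (k':ℕ) with hlt | hge
    · have := congrFun h ⟨(k:ℕ), by have := k.is_lt; omega⟩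
      simp only [fB] at this
      rw [dif_neg (by omega), dif_pos hlt] at this
      simp only [if_true] at this
      exact emb2_ne_one _ this.symm
    · have hlt : (k':ℕ) < (k:ℕ) := by
        rcases Nat.eq_or_lt_of_le hge with he | hl
        · exact absurd (Fin.ext he.symm) hne
        · omega
      have := congrFun h ⟨(k':ℕ), by have := k'.is_lt; omega⟩
      simp only [fB] at this
      rw [dif_pos hlt, dif_neg (by omega)] at this
      simp only [if_true] at this
      exact emb2_ne_one _ this
  subst hkk
  have hww : w = w' := by
    funext i
    have hik : (i:ℕ) < (k:ℕ) := i.is_lt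
    have := congrFun h ⟨(i:ℕ), by have := k.is_lt; omega⟩
    simp only [fB] at this
    rw [dif_pos hik, dif_pos hik] at this
    exact emb2_inj ((Fin.eta i i.is_lt) ▸ this)
  subst hww
  have hcc : c = c' := by
    have hk1 : (k:ℕ) + 1 < p := by have := k.is_lt; omega
    have := congrFun h ⟨(k:ℕ)+1, hk1⟩
    simp only [fB] at this
    rw [dif_neg (by omega), if_neg (by omega), dif_neg (by omega), if_neg (by omega)] at this
    exact emb2_inj this
  rw [hcc]

lemma fB_has_one (p : ℕ) (hp : 2 ≤ p) (x) :
    fB p x ⟨(x.1.1:ℕ), by have := x.1.1.is_lt; omega⟩ = 1 := by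
  simp only [fB]
  rw [dif_neg (by omega)]
  simp

lemma disj_AB (p : ℕ) (hp : 2 ≤ p) : Disjoint (Set.range (fA p)) (Set.range (fB p)) := by
  rw [Set.disjoint_left]
  rintro a ⟨w, rfl⟩ ⟨x, hx⟩
  have h1 := fB_has_one p hp x
  rw [hx] at h1
  exact emb2_ne_one _ h1

lemma disj_ABC (p : ℕ) (hp : 2 ≤ p) :
    Disjoint (Set.range (fA p) ∪ Set.range (fB p)) (Set.range (fC p)) := by
  rw [Set.disjoint_left]
  rintro a (⟨w, rfl⟩ | ⟨x, rfl⟩) ⟨w', hw⟩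
  · have h1 : fC p w' ⟨p-1, by omega⟩ = 1 := by
      simp only [fC]; rw [dif_neg (by omega)]
    rw [hw] at h1
    exact emb2_ne_one _ h1
  · have h1 : fC p w' ⟨p-1, by omega⟩ = 1 := by
      simp only [fC]; rw [dif_neg (by omega)]
    rw [hw] at h1
    have hk := x.1.1.is_lt
    simp only [fB] at h1
    rw [dif_neg (by omega), if_neg (by omega)] at h1
    exact emb2_ne_one _ h1

lemma sum_two_pow (n : ℕ) : ∑ i ∈ Finset.range n, 2^i = 2^n - 1 := by
  induction n with
  | zero => simp
  | succ n ih =>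
    rw [Finset.sum_range_succ, ih]
    have : 1 ≤ 2^n := Nat.one_le_two_pow
    rw [pow_succ]
    omega

/-- For `p ≥ 2`, the number of words of length `p` over the alphabet
`{0,1,2}` that occur as the initial `p` ternary digits of some ternary expansion
`0.d_1 d_2 …` of some element of the (middle-thirds) Cantor set equals `5·2^(p−1) − 2`.
(`cantorSet` is Mathlib's middle-thirds Cantor set.) -/
theorem cantor_initial_words_count (p : ℕ) (hp : 2 ≤ p) :
    Nat.card {b : Fin p → Fin 3 //
        ∃ d : ℕ → Fin 3,
          (∑' i : ℕ, ((d i : ℕ) : ℝ) / 3 ^ (i + 1)) ∈ cantorSet ∧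
          ∀ i : Fin p, d (i : ℕ) = b i} =
      5 * 2 ^ (p - 1) - 2 := by
  have e1 : Nat.card {b : Fin p → Fin 3 //
        ∃ d : ℕ → Fin 3,
          (∑' i : ℕ, ((d i : ℕ) : ℝ) / 3 ^ (i + 1)) ∈ cantorSet ∧
          ∀ i : Fin p, d (i : ℕ) = b i} = Nat.card {b : Fin p → Fin 3 // Good p b} :=
    Nat.card_congr (Equiv.subtypeEquivRight (fun b => counts_iff p b))
  rw [e1]
  have e2 : Nat.card {b : Fin p → Fin 3 // Good p b}
      = ({b : Fin p → Fin 3 | Good p b}).ncard := Nat.card_coe_set_eq _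
  rw [e2, good_eq_ranges p hp]
  rw [Set.ncard_union_eq (disj_ABC p hp) (Set.toFinite _) (Set.toFinite _),
    Set.ncard_union_eq (disj_AB p hp) (Set.toFinite _) (Set.toFinite _)]
  have cA : (Set.range (fA p)).ncard = 2 ^ p := by
    rw [← Nat.card_coe_set_eq, Nat.card_range_of_injective (fA_inj p),
      Nat.card_eq_fintype_card]
    simp
  have cB : (Set.range (fB p)).ncard = (2 ^ (p-1) - 1) * 2 := by
    rw [← Nat.card_coe_set_eq, Nat.card_range_of_injective (fB_inj p hp),
      Nat.card_eq_fintype_card, Fintype.card_prod, Fintype.card_sigma]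
    simp [Fin.sum_univ_eq_sum_range, sum_two_pow]
  have cC : (Set.range (fC p)).ncard = 2 ^ (p-1) := by
    rw [← Nat.card_coe_set_eq, Nat.card_range_of_injective (fC_inj p hp),
      Nat.card_eq_fintype_card]
    simp
  rw [cA, cB, cC]
  clear e1 e2 cA cB cC
  have h2 : 2 ^ p = 2 * 2 ^ (p-1) := by
    rw [← pow_succ']
    congr 1
    omega
  have h3 : 1 ≤ 2 ^ (p-1) := Nat.one_le_two_pow
  omega
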